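/- Let v_{i-1}, v_i, v_{i+1} be real numbers with a = v_i - v_{i-1} ≥ 0 and b = v_{i+1} - v_i > 0 (monotonically increasing data). For β ∈ ℝ define the interface value P(β) = β·(3v_i - v_{i-1})/2 + (1-β)·(v_i + v_{i+1})/2. If -b ≤ β·(b - a) ≤ 2a + b, then v_{i-1} ≤ P(β) ≤ v_{i+1}. -/
import Mathlib

theorem stmt_0 (vm v vp β : ℝ)
    (ha : 0 ≤ v - vm) (hb : 0 < vp - v)
    (h1 : -(vp - v) ≤ β * ((vp - v) - (v - vm)))
    (h2 : β * ((vp - v) - (v - vm)) ≤ 2 * (v - vm) + (vp - v)) :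
    vm ≤ β * (3 * v - vm) / 2 + (1 - β) * (v + vp) / 2 ∧
      β * (3 * v - vm) / 2 + (1 - β) * (v + vp) / 2 ≤ vp := by
  constructor <;> nlinarith [h1, h2, ha, hb]
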